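/- Smoothness of occupancy measures in the transition kernel: for a finite-horizon MDP with fixed policy π and two transition kernels p and p̃, the occupancy measures satisfy q̃(s,a,h) − q(s,a,h) = ∑_{(s',a'),s''} ∑_{i=1}^{h−1} q(s',a',i)·(p̃(s''|s',a',i) − p(s''|s',a',i))·q̃_{(s'',i+1)}(s,a,h), where q̃_{(s'',i+1)}(s,a,h) denotes the occupancy of (s,a,h) under (p̃,π) when starting from state s'' at step i+1. -/
import Mathlib


/-- State-occupancy measure: probability of being in state `s` at step `i + n`
when starting from state `s0` at step `i`, under transition kernel `p` and
policy `π` (steps are 0-indexed). -/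
noncomputable def occAux {S A : Type*} [Fintype S] [DecidableEq S]
    (p : S → A → ℕ → S → ℝ) (π : S → ℕ → A) (s0 : S) (i : ℕ) :
    ℕ → S → ℝ
  | 0, s => if s = s0 then 1 else 0
  | n + 1, s =>
      ∑ s' : S, occAux p π s0 i n s' * p s' (π s' (i + n)) (i + n) s

/-- State-action occupancy `q_{(s0,i)}(s,a,h)` (for `h ≥ i`). -/
noncomputable def occSA {S A : Type*} [Fintype S] [DecidableEq S] [DecidableEq A]
    (p : S → A → ℕ → S → ℝ) (π : S → ℕ → A) (s0 : S) (i : ℕ)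
    (h : ℕ) (s : S) (a : A) : ℝ :=
  if π s h = a then occAux p π s0 i (h - i) s else 0

lemma occAux_succ {S A : Type*} [Fintype S] [DecidableEq S]
    (p : S → A → ℕ → S → ℝ) (π : S → ℕ → A) (s0 : S) (i n : ℕ) (s : S) :
    occAux p π s0 i (n + 1) s =
      ∑ s' : S, occAux p π s0 i n s' * p s' (π s' (i + n)) (i + n) s := rfl

lemma occAux_first {S A : Type*} [Fintype S] [DecidableEq S]
    (p : S → A → ℕ → S → ℝ) (π : S → ℕ → A) (s0 : S) (i : ℕ) :
    ∀ n s, occAux p π s0 i (n + 1) s =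
      ∑ s'' : S, p s0 (π s0 i) i s'' * occAux p π s'' (i + 1) n s := by
  intro n
  induction n with
  | zero =>
    intro s
    simp [occAux]
  | succ n ih =>
    intro s
    rw [occAux_succ]
    have e2 : ∀ s'' : S, occAux p π s'' (i + 1) (n + 1) s
        = ∑ s' : S, occAux p π s'' (i + 1) n s' * p s' (π s' (i + 1 + n)) (i + 1 + n) s :=
      fun s'' => rfl
    simp only [e2, Finset.mul_sum]
    rw [Finset.sum_comm]
    refine Finset.sum_congr rfl fun s' _ => ?_
    rw [ih s', Finset.sum_mul]
    refine Finset.sum_congr rfl fun s'' _ => ?_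
    have e : i + 1 + n = i + (n + 1) := by omega
    rw [e]; ring

/-- Smoothness of occupancy measures in the transition kernel:
`q̃(s,a,h) − q(s,a,h) = ∑_{(s',a'),s''} ∑_{i<h} q(s',a',i)
  (p̃(s''|s',a',i) − p(s''|s',a',i)) q̃_{(s'',i+1)}(s,a,h)`. -/
theorem occupancy_smoothness {S A : Type*} [Fintype S] [Fintype A]
    [DecidableEq S] [DecidableEq A]
    (p ptilde : S → A → ℕ → S → ℝ) (π : S → ℕ → A) (s₁ : S)
    (hp0 : ∀ s a h s', 0 ≤ p s a h s')
    (hp1 : ∀ s a h, ∑ s' : S, p s a h s' = 1)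
    (hpt0 : ∀ s a h s', 0 ≤ ptilde s a h s')
    (hpt1 : ∀ s a h, ∑ s' : S, ptilde s a h s' = 1)
    (h : ℕ) (s : S) (a : A) :
    occSA ptilde π s₁ 0 h s a - occSA p π s₁ 0 h s a =
      ∑ s' : S, ∑ a' : A, ∑ s'' : S, ∑ i ∈ Finset.range h,
        occSA p π s₁ 0 i s' a' *
          (ptilde s' a' i s'' - p s' a' i s'') *
            occSA ptilde π s'' (i + 1) h s a := by
  classical
  by_cases hsa : π s h = a
  swap
  · simp [occSA, hsa]
  simp only [occSA, hsa, if_true, Nat.sub_zero]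
  have key : ∀ s' : S,
      (∑ a' : A, ∑ s'' : S, ∑ i ∈ Finset.range h,
        (if π s' i = a' then occAux p π s₁ 0 i s' else 0) *
          (ptilde s' a' i s'' - p s' a' i s'') *
            occAux ptilde π s'' (i + 1) (h - (i + 1)) s)
      = ∑ i ∈ Finset.range h, ∑ s'' : S,
          occAux p π s₁ 0 i s' *
            (ptilde s' (π s' i) i s'' - p s' (π s' i) i s'') *
              occAux ptilde π s'' (i + 1) (h - (i + 1)) s := by
    intro s'
    rw [Finset.sum_comm]
    rw [Finset.sum_congr rfl fun s'' (_ : s'' ∈ Finset.univ) => Finset.sum_comm]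
    rw [Finset.sum_comm]
    refine Finset.sum_congr rfl fun i _ => ?_
    refine Finset.sum_congr rfl fun s'' _ => ?_
    simp [ite_mul, zero_mul, Finset.sum_ite_eq]
  simp only [key]
  rw [Finset.sum_comm]
  rw [show occAux ptilde π s₁ 0 h s
      = ∑ s' : S, occAux p π s₁ 0 0 s' * occAux ptilde π s' 0 (h - 0) s by
    simp [occAux]]
  rw [show occAux p π s₁ 0 h s
      = ∑ s' : S, occAux p π s₁ 0 h s' * occAux ptilde π s' h (h - h) s by
    simp [occAux]]
  rw [← Finset.sum_range_sub'
    (fun i => ∑ s' : S, occAux p π s₁ 0 i s' * occAux ptilde π s' i (h - i) s) h]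
  refine Finset.sum_congr rfl fun i hi => ?_
  rw [Finset.mem_range] at hi
  have h1 : h - i = (h - (i + 1)) + 1 := by omega
  have e1 : ∀ s' : S, occAux ptilde π s' i (h - i) s
      = ∑ s'' : S, ptilde s' (π s' i) i s'' * occAux ptilde π s'' (i + 1) (h - (i + 1)) s := by
    intro s'
    rw [h1, occAux_first]
  have e2 : ∀ s'' : S, occAux p π s₁ 0 (i + 1) s''
      = ∑ s' : S, occAux p π s₁ 0 i s' * p s' (π s' i) i s'' := by
    intro s''
    rw [occAux_succ]
    simp
  have lhs1 : (∑ s' : S, occAux p π s₁ 0 i s' * occAux ptilde π s' i (h - i) s)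
      = ∑ s' : S, ∑ s'' : S, occAux p π s₁ 0 i s' * ptilde s' (π s' i) i s'' *
          occAux ptilde π s'' (i + 1) (h - (i + 1)) s := by
    refine Finset.sum_congr rfl fun s' _ => ?_
    rw [e1 s', Finset.mul_sum]
    exact Finset.sum_congr rfl fun s'' _ => by ring
  have lhs2 : (∑ s' : S, occAux p π s₁ 0 (i + 1) s' * occAux ptilde π s' (i + 1) (h - (i + 1)) s)
      = ∑ s' : S, ∑ s'' : S, occAux p π s₁ 0 i s' * p s' (π s' i) i s'' *
          occAux ptilde π s'' (i + 1) (h - (i + 1)) s := by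
    simp only [e2, Finset.sum_mul]
    exact Finset.sum_comm
  rw [lhs1, lhs2, ← Finset.sum_sub_distrib]
  refine Finset.sum_congr rfl fun s' _ => ?_
  rw [← Finset.sum_sub_distrib]
  exact Finset.sum_congr rfl fun s'' _ => by ring
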